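/- Let W be a real 2×2 matrix satisfying Wᵀ(1 ± (i/(2ν_B))Ω)W ≤ 1 ± (i/(2ν_A))Ω for both signs, where ν_A, ν_B ≥ 1/2. Then there exists a symmetric positive semidefinite real 2×2 matrix P satisfying the same two inequalities with Tr(P) ≥ Tr(W). -/

import Mathlib

set_option maxHeartbeats 4000000
open Matrix
open scoped ComplexOrder

noncomputable def Ωc : Matrix (Fin 2) (Fin 2) ℂ := !![0, 1; -1, 0]

noncomputable def herm (p m t q : ℝ) : Matrix (Fin 2) (Fin 2) ℂ :=
  !![(p:ℂ), (m:ℂ) + (t:ℂ)*Complex.I; (m:ℂ) - (t:ℂ)*Complex.I, (q:ℂ)]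

lemma expand_form (ν μ : ℝ) (X : Matrix (Fin 2) (Fin 2) ℝ) :
    ((1 : Matrix (Fin 2) (Fin 2) ℂ) + (Complex.I / (2 * (ν : ℂ))) • Ωc)
      - (X.map Complex.ofReal)ᵀ *
        ((1 : Matrix (Fin 2) (Fin 2) ℂ) + (Complex.I / (2 * (μ : ℂ))) • Ωc) *
        (X.map Complex.ofReal)
    = herm (1 - (X 0 0^2 + X 1 0^2)) (-(X 0 0 * X 0 1 + X 1 0 * X 1 1))
        (1/(2*ν) - X.det/(2*μ)) (1 - (X 0 1^2 + X 1 1^2)) := by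
  ext i j
  fin_cases i <;> fin_cases j <;>
    simp [herm, Ωc, Matrix.mul_apply, Fin.sum_univ_two, Matrix.one_apply, det_fin_two] <;>
    push_cast <;> ring

lemma sub_form (ν : ℝ) : (1 : Matrix (Fin 2) (Fin 2) ℂ) - (Complex.I / (2 * (ν : ℂ))) • Ωc
    = 1 + (Complex.I / (2 * ((-ν : ℝ) : ℂ))) • Ωc := by
  rw [show ((2:ℂ) * ((-ν : ℝ):ℂ)) = -(2*(ν:ℂ)) by push_cast; ring, div_neg, neg_smul,
    sub_eq_add_neg]

lemma herm_posSemidef {p m t q : ℝ} (hp : 0 ≤ p) (hq : 0 ≤ q) (h : m^2 + t^2 ≤ p*q) :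
    (herm p m t q).PosSemidef := by
  rcases eq_or_lt_of_le hp with hp0 | hp0
  · have hm : m = 0 := by nlinarith
    have ht : t = 0 := by nlinarith
    have : herm p m t q = (!![0, 0; 0, (Real.sqrt q : ℂ)])ᴴ * !![0, 0; 0, (Real.sqrt q : ℂ)] := by
      ext i j
      fin_cases i <;> fin_cases j <;>
        simp [herm, hm, ht, ← hp0, Matrix.mul_apply, Fin.sum_univ_two] <;>
        push_cast [← Complex.ofReal_mul, Real.mul_self_sqrt hq] <;> ring
    rw [this]
    exact posSemidef_conjTranspose_mul_self _
  · have hnum : 0 ≤ p*q - m^2 - t^2 := by nlinarith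
    set r : ℝ := (p*q - m^2 - t^2)/p with hr
    have hrn : 0 ≤ r := div_nonneg hnum hp
    set L : Matrix (Fin 2) (Fin 2) ℂ :=
      !![(Real.sqrt p : ℂ), ((m:ℂ) + (t:ℂ)*Complex.I)/(Real.sqrt p : ℂ); 0, (Real.sqrt r : ℂ)]
    have hsp : (Real.sqrt p : ℂ) ≠ 0 := by
      simp [Complex.ofReal_ne_zero, Real.sqrt_ne_zero'.2 hp0]
    have hps : ((Real.sqrt p : ℂ)) * (Real.sqrt p : ℂ) = (p:ℂ) := by
      rw [← Complex.ofReal_mul, Real.mul_self_sqrt hp]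
    have hrs : ((Real.sqrt r : ℂ)) * (Real.sqrt r : ℂ) = (r:ℂ) := by
      rw [← Complex.ofReal_mul, Real.mul_self_sqrt hrn]
    have hrp : (r:ℂ) * (p:ℂ) = (p:ℂ)*(q:ℂ) - (m:ℂ)^2 - (t:ℂ)^2 := by
      norm_cast
      rw [hr, div_mul_cancel₀ _ hp0.ne']
    have : herm p m t q = Lᴴ * L := by
      ext i j
      fin_cases i <;> fin_cases j <;>
        simp [herm, L, Matrix.mul_apply, Fin.sum_univ_two, Matrix.conjTranspose_apply,
          Complex.conj_ofReal, map_div₀]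
      · exact hps.symm
      · rw [mul_div_cancel₀ _ hsp]
      · rw [div_mul_cancel₀ _ hsp]; ring
      · have hpc : ((p:ℂ)) ≠ 0 := by exact_mod_cast hp0.ne'
        rw [div_mul_div_comm, hps, hrs, div_add' _ _ _ hpc, eq_div_iff hpc]
        linear_combination -hrp + (t:ℂ)^2 * Complex.I_sq
    rw [this]
    exact posSemidef_conjTranspose_mul_self _

lemma psd_det_nonneg {n : Type*} [Fintype n] [DecidableEq n] {A : Matrix n n ℂ}
    (h : A.PosSemidef) : 0 ≤ A.det := by
  rw [h.1.det_eq_prod_eigenvalues]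
  exact Finset.prod_nonneg fun i _ => by simpa using h.eigenvalues_nonneg i

lemma herm_psd_elim {p m t q : ℝ} (h : (herm p m t q).PosSemidef) :
    0 ≤ p ∧ 0 ≤ q ∧ m^2 + t^2 ≤ p*q := by
  have h1 : (0:ℂ) ≤ (p:ℂ) := by
    have := h.dotProduct_mulVec_nonneg ![1, 0]
    simpa [herm, dotProduct, Matrix.mulVec, Fin.sum_univ_two] using this
  have h2 : (0:ℂ) ≤ (q:ℂ) := by
    have := h.dotProduct_mulVec_nonneg ![0, 1]
    simpa [herm, dotProduct, Matrix.mulVec, Fin.sum_univ_two] using this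
  have h3 := psd_det_nonneg h
  have hdet : (herm p m t q).det = ((p*q - m^2 - t^2 : ℝ) : ℂ) := by
    rw [det_fin_two]
    simp only [herm, Matrix.cons_val', Matrix.cons_val_zero, Matrix.cons_val_one,
      Matrix.head_cons, Matrix.empty_val', Matrix.cons_val_fin_one, Matrix.head_fin_const,
      Matrix.of_apply]
    push_cast
    linear_combination (t:ℂ)^2 * Complex.I_sq
  rw [hdet, Complex.zero_le_real] at h3
  exact ⟨Complex.zero_le_real.1 h1, Complex.zero_le_real.1 h2, by linarith⟩

lemma quad_nonneg {p m q : ℝ} (hp : 0 ≤ p) (hq : 0 ≤ q) (h : m^2 ≤ p*q) (x y : ℝ) :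
    0 ≤ p*x^2 + 2*m*x*y + q*y^2 := by
  rcases eq_or_lt_of_le hp with hp0 | hp0
  · have hm : m = 0 := by nlinarith
    rw [hm, ← hp0]
    nlinarith [mul_nonneg hq (sq_nonneg y)]
  · nlinarith [sq_nonneg (p*x + m*y), mul_nonneg (sub_nonneg.2 h) (sq_nonneg y)]

lemma real_psd {p m q : ℝ} (hp : 0 ≤ p) (hq : 0 ≤ q) (h : m^2 ≤ p*q) :
    (!![p, m; m, q] : Matrix (Fin 2) (Fin 2) ℝ).PosSemidef := by
  refine PosSemidef.of_dotProduct_mulVec_nonneg ?_ ?_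
  · ext i j
    fin_cases i <;> fin_cases j <;> simp [Matrix.conjTranspose_apply]
  · intro x
    have key := quad_nonneg hp hq h (x 0) (x 1)
    simp only [dotProduct, Matrix.mulVec, Fin.sum_univ_two, star_trivial,
      Matrix.cons_val', Matrix.cons_val_zero, Matrix.cons_val_one, Matrix.head_cons,
      Matrix.empty_val', Matrix.cons_val_fin_one, Matrix.head_fin_const, Matrix.of_apply]
    nlinarith [key]

lemma sq_sub_abs_le {u v : ℝ} (hu : 0 ≤ u) : (u - |v|)^2 ≤ (u - v)^2 := by
  rcases abs_cases v with ⟨h1, _⟩ | ⟨h1, h2⟩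
  · rw [h1]
  · rw [h1]
    nlinarith [mul_nonneg hu (neg_nonneg.2 h2.le)]

theorem reduce_to_symmetric_psd (νA νB : ℝ) (hA : νA ≥ 1/2) (hB : νB ≥ 1/2)
    (W : Matrix (Fin 2) (Fin 2) ℝ)
    (hp : (((1 : Matrix (Fin 2) (Fin 2) ℂ) + (Complex.I / (2 * (νA : ℂ))) • Ωc)
        - (W.map Complex.ofReal)ᵀ *
          ((1 : Matrix (Fin 2) (Fin 2) ℂ) + (Complex.I / (2 * (νB : ℂ))) • Ωc) *
          (W.map Complex.ofReal)).PosSemidef)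
    (hm : (((1 : Matrix (Fin 2) (Fin 2) ℂ) - (Complex.I / (2 * (νA : ℂ))) • Ωc)
        - (W.map Complex.ofReal)ᵀ *
          ((1 : Matrix (Fin 2) (Fin 2) ℂ) - (Complex.I / (2 * (νB : ℂ))) • Ωc) *
          (W.map Complex.ofReal)).PosSemidef) :
    ∃ P : Matrix (Fin 2) (Fin 2) ℝ, Pᵀ = P ∧ P.PosSemidef ∧
      (((1 : Matrix (Fin 2) (Fin 2) ℂ) + (Complex.I / (2 * (νA : ℂ))) • Ωc)
        - (P.map Complex.ofReal)ᵀ *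
          ((1 : Matrix (Fin 2) (Fin 2) ℂ) + (Complex.I / (2 * (νB : ℂ))) • Ωc) *
          (P.map Complex.ofReal)).PosSemidef ∧
      (((1 : Matrix (Fin 2) (Fin 2) ℂ) - (Complex.I / (2 * (νA : ℂ))) • Ωc)
        - (P.map Complex.ofReal)ᵀ *
          ((1 : Matrix (Fin 2) (Fin 2) ℂ) - (Complex.I / (2 * (νB : ℂ))) • Ωc) *
          (P.map Complex.ofReal)).PosSemidef ∧
      W.trace ≤ P.trace := by
  have hνA : (0:ℝ) < νA := by linarith
  have hνB : (0:ℝ) < νB := by linarith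
  by_cases hW : W = 0
  · exact ⟨W, by rw [hW]; simp, hW ▸ Matrix.PosSemidef.zero, hp, hm, le_refl _⟩
  rw [expand_form] at hp
  rw [sub_form νA, sub_form νB, expand_form (-νA) (-νB)] at hm
  clear hm
  set e := W 0 0^2 + W 1 0^2 with he
  set g := W 0 1^2 + W 1 1^2 with hg
  set f := W 0 0 * W 0 1 + W 1 0 * W 1 1 with hf
  set s := |W.det| with hs
  obtain ⟨hp1, hp2, hp3⟩ := herm_psd_elim hp
  clear hp
  have hs0 : (0:ℝ) ≤ s := abs_nonneg _
  have hdetW : W.det = W 0 0 * W 1 1 - W 0 1 * W 1 0 := det_fin_two W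
  have heg : e * g = f^2 + W.det^2 := by rw [he, hg, hf, hdetW]; ring
  have hs2 : s^2 = W.det^2 := sq_abs _
  have hds : W.det ≤ s := by rw [hs]; exact le_abs_self _
  set T := e + g + 2*s with hT
  have hEG : (0:ℝ) < e + g := by
    rcases (by positivity : (0:ℝ) ≤ e + g).lt_or_eq with h | h
    · exact h
    · exfalso
      apply hW
      have q00 : W 0 0 = 0 := by
        have : W 0 0 ^ 2 = 0 := by nlinarith [sq_nonneg (W 0 1), sq_nonneg (W 1 0), sq_nonneg (W 1 1), sq_nonneg (W 0 0)]
        exact pow_eq_zero_iff two_ne_zero |>.1 this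
      have q01 : W 0 1 = 0 := by
        have : W 0 1 ^ 2 = 0 := by nlinarith [sq_nonneg (W 0 1), sq_nonneg (W 1 0), sq_nonneg (W 1 1), sq_nonneg (W 0 0)]
        exact pow_eq_zero_iff two_ne_zero |>.1 this
      have q10 : W 1 0 = 0 := by
        have : W 1 0 ^ 2 = 0 := by nlinarith [sq_nonneg (W 0 1), sq_nonneg (W 1 0), sq_nonneg (W 1 1), sq_nonneg (W 0 0)]
        exact pow_eq_zero_iff two_ne_zero |>.1 this
      have q11 : W 1 1 = 0 := by
        have : W 1 1 ^ 2 = 0 := by nlinarith [sq_nonneg (W 0 1), sq_nonneg (W 1 0), sq_nonneg (W 1 1), sq_nonneg (W 0 0)]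
        exact pow_eq_zero_iff two_ne_zero |>.1 this
      ext i j
      fin_cases i <;> fin_cases j <;> simp [q00, q01, q10, q11]
  have hTpos : (0:ℝ) < T := by rw [hT]; linarith
  have hfineq : f^2 ≤ (e+s)*(g+s) := by
    nlinarith [mul_nonneg hs0 (le_of_lt hEG), sq_nonneg W.det]
  have hsq : (W 0 0 + W 1 1)^2 ≤ T := by
    rw [hT]
    nlinarith [sq_nonneg (W 0 1 - W 1 0), hds, hdetW]
  have habs : (1/(2*νA) - s/(2*νB))^2 ≤ (1/(2*νA) - W.det/(2*νB))^2 := by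
    have h := sq_sub_abs_le (u := 1/(2*νA)) (v := W.det/(2*νB)) (by positivity)
    rwa [abs_div, abs_of_pos (by linarith : (0:ℝ) < 2*νB), ← hs] at h
  set τ := Real.sqrt T with hτdef
  have hτpos : (0:ℝ) < τ := Real.sqrt_pos.2 hTpos
  have hτ2 : τ^2 = T := Real.sq_sqrt hTpos.le
  have hττ : τ*τ = T := by rw [← hτ2]; ring
  have k1 : ((e+s)/τ)^2 + (f/τ)^2 = e := by
    rw [div_pow, div_pow, ← add_div, hτ2, div_eq_iff hTpos.ne']
    rw [hT]; linear_combination hs2 - heg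
  have k2 : ((f/τ))^2 + ((g+s)/τ)^2 = g := by
    rw [div_pow, div_pow, ← add_div, hτ2, div_eq_iff hTpos.ne']
    rw [hT]; linear_combination hs2 - heg
  have k3 : (e+s)/τ * (f/τ) + (f/τ) * ((g+s)/τ) = f := by
    rw [div_mul_div_comm, div_mul_div_comm, ← add_div, hττ,
      div_eq_iff hTpos.ne']
    rw [hT]; ring
  have k4 : (!![(e+s)/τ, f/τ; f/τ, (g+s)/τ] : Matrix (Fin 2) (Fin 2) ℝ).det = s := by
    rw [det_fin_two]
    simp only [Matrix.cons_val', Matrix.cons_val_zero, Matrix.cons_val_one, Matrix.head_cons,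
      Matrix.empty_val', Matrix.cons_val_fin_one, Matrix.head_fin_const, Matrix.of_apply]
    rw [div_mul_div_comm, div_mul_div_comm, div_sub_div_same, hττ, div_eq_iff hTpos.ne']
    rw [hT]; linear_combination heg - hs2
  refine ⟨!![(e+s)/τ, f/τ; f/τ, (g+s)/τ], ?_, ?_, ?_, ?_, ?_⟩
  · ext i j
    fin_cases i <;> fin_cases j <;> simp
  · exact real_psd (by positivity) (by positivity) (by
      rw [div_pow, div_mul_div_comm, hτ2, hττ]
      exact (div_le_div_iff_of_pos_right hTpos).2 hfineq)
  · rw [expand_form, k4]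
    apply herm_posSemidef
    · simp only [Matrix.cons_val', Matrix.cons_val_zero, Matrix.cons_val_one, Matrix.head_cons,
        Matrix.empty_val', Matrix.cons_val_fin_one, Matrix.head_fin_const, Matrix.of_apply]
      rw [k1]; exact hp1
    · simp only [Matrix.cons_val', Matrix.cons_val_zero, Matrix.cons_val_one, Matrix.head_cons,
        Matrix.empty_val', Matrix.cons_val_fin_one, Matrix.head_fin_const, Matrix.of_apply]
      rw [k2]; exact hp2
    · simp only [Matrix.cons_val', Matrix.cons_val_zero, Matrix.cons_val_one, Matrix.head_cons,
        Matrix.empty_val', Matrix.cons_val_fin_one, Matrix.head_fin_const, Matrix.of_apply]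
      rw [k1, k2, k3]
      exact (add_le_add_right habs ((-f)^2)).trans hp3
  · rw [sub_form νA, sub_form νB, expand_form (-νA) (-νB), k4]
    apply herm_posSemidef
    · simp only [Matrix.cons_val', Matrix.cons_val_zero, Matrix.cons_val_one, Matrix.head_cons,
        Matrix.empty_val', Matrix.cons_val_fin_one, Matrix.head_fin_const, Matrix.of_apply]
      rw [k1]; exact hp1
    · simp only [Matrix.cons_val', Matrix.cons_val_zero, Matrix.cons_val_one, Matrix.head_cons,
        Matrix.empty_val', Matrix.cons_val_fin_one, Matrix.head_fin_const, Matrix.of_apply]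
      rw [k2]; exact hp2
    · simp only [Matrix.cons_val', Matrix.cons_val_zero, Matrix.cons_val_one, Matrix.head_cons,
        Matrix.empty_val', Matrix.cons_val_fin_one, Matrix.head_fin_const, Matrix.of_apply]
      rw [k1, k2, k3]
      have hflip : (1/(2*(-νA)) - s/(2*(-νB)))^2 = (1/(2*νA) - s/(2*νB))^2 := by ring
      rw [hflip]
      exact (add_le_add_right habs ((-f)^2)).trans hp3
  · rw [trace_fin_two, trace_fin_two]
    simp only [Matrix.cons_val', Matrix.cons_val_zero, Matrix.cons_val_one, Matrix.head_cons,
      Matrix.empty_val', Matrix.cons_val_fin_one, Matrix.head_fin_const, Matrix.of_apply]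
    have htr : (e+s)/τ + (g+s)/τ = τ := by
      rw [← add_div, div_eq_iff hτpos.ne']
      rw [hT] at hτ2; linear_combination -hτ2
    rw [htr]
    calc W 0 0 + W 1 1 ≤ |W 0 0 + W 1 1| := le_abs_self _
      _ = Real.sqrt ((W 0 0 + W 1 1)^2) := (Real.sqrt_sq_eq_abs _).symm
      _ ≤ τ := Real.sqrt_le_sqrt hsq
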